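/- Let r < t be positive integers with t = 2s (even). Label the parts of K_{r,t} as {u_0,…,u_{r−1}} and {v_0,…,v_{t−1}}. For 0 ≤ j ≤ s−1 define G_j with edge set {u_i v_{(i+2j) mod t} : 0 ≤ i ≤ r−1} ∪ {u_i v_{(i+2j+1) mod t} : 0 ≤ i ≤ r−1}. Then each G_j is a path with 2r edges, the G_j are pairwise edge-disjoint, and their union is all of K_{r,t}; hence K_{r,t} decomposes into exactly s paths and is of class 1^±. -/

import Mathlib

open SimpleGraph

namespace Signed

variable {V : Type*}

/-- The color set `M n`. -/
def colorSet (n : ℕ) : Set ℤ :=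
  {m : ℤ | 2 * m.natAbs ≤ n ∧ (Even n → m ≠ 0)}

/-- `f` is an `n`-edge-coloring of the signed graph `(G, σ)`. -/
def IsEdgeColoring (G : SimpleGraph V) (σ : Sym2 V → ℤ) (n : ℕ)
    (f : V → Sym2 V → ℤ) : Prop :=
  (∀ u v, G.Adj u v → f u s(u, v) ∈ colorSet n) ∧
  (∀ u v, G.Adj u v → f u s(u, v) = - σ s(u, v) * f v s(u, v)) ∧
  (∀ u v w, G.Adj u v → G.Adj u w → v ≠ w → f u s(u, v) ≠ f u s(u, w))

/-- `(G, σ)` admits an `n`-edge-coloring. -/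
def Colorable (G : SimpleGraph V) (σ : Sym2 V → ℤ) (n : ℕ) : Prop :=
  ∃ f, IsEdgeColoring G σ n f

/-- The signed chromatic index. -/
noncomputable def chromIndex (G : SimpleGraph V) (σ : Sym2 V → ℤ) : ℕ :=
  sInf {n | Colorable G σ n}

/-- `σ` is a signature on `G`: it takes values `±1` on edges. -/
def IsSignature (G : SimpleGraph V) (σ : Sym2 V → ℤ) : Prop :=
  ∀ e ∈ G.edgeSet, σ e = 1 ∨ σ e = -1

/-- Maximum degree (classical decidability). -/
noncomputable def maxDeg [Fintype V] (G : SimpleGraph V) : ℕ :=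
  @SimpleGraph.maxDegree V G _ (Classical.decRel _)

/-- degree of a vertex, instance-free. -/
noncomputable def deg (G : SimpleGraph V) (v : V) : ℕ :=
  (G.neighborSet v).ncard

/-- A signed graph is balanced if every cycle has sign product `1`. -/
def Balanced (H : SimpleGraph V) (σ : Sym2 V → ℤ) : Prop :=
  ∀ (u : V) (w : H.Walk u u), w.IsCycle → (w.edges.map σ).prod = 1

/-- A set of edges of `G` forming a matching. -/
def IsMatchingSet (G : SimpleGraph V) (M : Set (Sym2 V)) : Prop :=
  M ⊆ G.edgeSet ∧ ∀ e ∈ M, ∀ e' ∈ M, ∀ v : V, v ∈ e → v ∈ e' → e = e'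

/-- `H` is a path graph: some path walk carries all of its edges. -/
def IsPathGraph (H : SimpleGraph V) : Prop :=
  ∃ (u v : V) (p : H.Walk u v), p.IsPath ∧ ∀ e, e ∈ H.edgeSet ↔ e ∈ p.edges

/-- Class `1^±`. -/
def Class1pm [Fintype V] (G : SimpleGraph V) : Prop :=
  ∀ σ : Sym2 V → ℤ, IsSignature G σ → chromIndex G σ = maxDeg G

/-- Class `2^±`. -/
def Class2pm [Fintype V] (G : SimpleGraph V) : Prop :=
  ∀ σ : Sym2 V → ℤ, IsSignature G σ → chromIndex G σ = maxDeg G + 1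

end Signed

open Signed SimpleGraph


/-- The vertex `v_{m mod t}` of the `t`-side. -/
def bidx (t : ℕ) (ht : 0 < t) (m : ℕ) : Fin t := ⟨m % t, Nat.mod_lt _ ht⟩

/-- The `j`-th path `G_j` in the decomposition of `K_{r,t}`. -/
def bipPath (r t : ℕ) (ht : 0 < t) (j : ℕ) : SimpleGraph (Fin r ⊕ Fin t) :=
  SimpleGraph.fromEdgeSet
    {e | ∃ i : Fin r,
      e = s(Sum.inl i, Sum.inr (bidx t ht (i.val + 2 * j))) ∨
      e = s(Sum.inl i, Sum.inr (bidx t ht (i.val + 2 * j + 1)))}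

section Aux

variable {r t : ℕ}

lemma bidx_eq_iff (ht : 0 < t) (m m' : ℕ) : bidx t ht m = bidx t ht m' ↔ m % t = m' % t := by
  simp [bidx, Fin.ext_iff]

lemma bipPath_edgeSet (ht : 0 < t) (j : ℕ) :
    (bipPath r t ht j).edgeSet =
      {e | ∃ i : Fin r,
        e = s(Sum.inl i, Sum.inr (bidx t ht (i.val + 2 * j))) ∨
        e = s(Sum.inl i, Sum.inr (bidx t ht (i.val + 2 * j + 1)))} := by
  rw [bipPath, SimpleGraph.edgeSet_fromEdgeSet]
  ext e
  simp only [Set.mem_diff, Set.mem_setOf_eq, and_iff_left_iff_imp]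
  rintro ⟨i, h | h⟩ <;> subst h <;> simp

lemma bipPath_adj (ht : 0 < t) (j : ℕ) (u v : Fin r ⊕ Fin t) :
    (bipPath r t ht j).Adj u v ↔ s(u, v) ∈ (bipPath r t ht j).edgeSet := by
  rw [SimpleGraph.mem_edgeSet]

end Aux
section Walks

variable {r t : ℕ}

lemma adj1 (ht : 0 < t) (j : ℕ) {m : ℕ} (hm : m < r) :
    (bipPath r t ht j).Adj (Sum.inr (bidx t ht (m + 2 * j))) (Sum.inl ⟨m, hm⟩) := by
  rw [bipPath_adj, bipPath_edgeSet]
  exact ⟨⟨m, hm⟩, Or.inl (Sym2.eq_swap)⟩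

lemma adj2 (ht : 0 < t) (j : ℕ) {m : ℕ} (hm : m < r) :
    (bipPath r t ht j).Adj (Sum.inl ⟨m, hm⟩) (Sum.inr (bidx t ht (m + 1 + 2 * j))) := by
  rw [bipPath_adj, bipPath_edgeSet]
  refine ⟨⟨m, hm⟩, Or.inr ?_⟩
  have : bidx t ht ((⟨m, hm⟩ : Fin r).val + 2 * j + 1) = bidx t ht (m + 1 + 2 * j) := by
    rw [bidx_eq_iff]
    show (m + 2 * j + 1) % t = (m + 1 + 2 * j) % t
    congr 1; omega
  rw [this]

/-- The path walk in `G_j` from `v_{(m+2j) mod t}` to `v_{(r+2j) mod t}`. -/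
def pwalk (r t : ℕ) (ht : 0 < t) (j : ℕ) : ∀ m, m < r →
    (bipPath r t ht j).Walk (Sum.inr (bidx t ht (m + 2 * j))) (Sum.inr (bidx t ht (r + 2 * j)))
  | m, hm =>
    if h : m + 1 < r then
      Walk.cons (adj1 ht j hm) (Walk.cons (adj2 ht j hm) (pwalk r t ht j (m + 1) h))
    else
      Walk.cons (adj1 ht j hm) (Walk.cons (adj2 ht j hm)
        (Walk.nil.copy (by congr 2; omega) rfl))
  termination_by m _ => r - m

end Walks
section Spec

variable {r t : ℕ}

lemma bidx_inj (ht : 0 < t) {a b : ℕ} (hab : a ≤ b) (hlt : b - a < t)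
    (h : bidx t ht a = bidx t ht b) : a = b := by
  rw [bidx_eq_iff] at h
  have hd := (Nat.modEq_iff_dvd' hab).mp h
  rcases Nat.eq_zero_or_pos (b - a) with h0 | h0
  · omega
  · have := Nat.le_of_dvd h0 hd; omega

lemma bidx_shift (ht : 0 < t) (m j : ℕ) :
    bidx t ht (m + 2 * j + 1) = bidx t ht (m + 1 + 2 * j) := by
  rw [bidx_eq_iff]; congr 1; omega

lemma pwalk_spec (ht : 0 < t) (hrt : r < t) (j : ℕ) : ∀ n m (hm : m < r), r - m ≤ n →
    (pwalk r t ht j m hm).IsPath ∧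
    (pwalk r t ht j m hm).length = 2 * (r - m) ∧
    (∀ x ∈ (pwalk r t ht j m hm).support,
      (∃ i : Fin r, m ≤ i.val ∧ x = Sum.inl i) ∨
      (∃ k, m ≤ k ∧ k ≤ r ∧ x = Sum.inr (bidx t ht (k + 2 * j)))) ∧
    (∀ i : Fin r, m ≤ i.val →
      s(Sum.inl i, Sum.inr (bidx t ht (i.val + 2 * j))) ∈ (pwalk r t ht j m hm).edges ∧
      s(Sum.inl i, Sum.inr (bidx t ht (i.val + 2 * j + 1))) ∈ (pwalk r t ht j m hm).edges) := by
  intro n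
  induction n with
  | zero => intro m hm h; omega
  | succ n ih =>
    intro m hm hle
    rw [pwalk]
    split_ifs with h
    · obtain ⟨ihp, ihl, ihs, ihe⟩ := ih (m + 1) h (by omega)
      refine ⟨?_, ?_, ?_, ?_⟩
      · rw [Walk.cons_isPath_iff, Walk.cons_isPath_iff]
        refine ⟨⟨ihp, ?_⟩, ?_⟩
        · intro hx
          rcases ihs _ hx with ⟨i, hi, hieq⟩ | ⟨k, hk, _, hkeq⟩
          · rw [Sum.inl.injEq] at hieq
            have : ((⟨m, hm⟩ : Fin r) : ℕ) = (i : ℕ) := by rw [hieq]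
            simp only [Fin.val_mk] at this
            omega
          · exact absurd hkeq (by simp)
        · rw [Walk.support_cons]
          simp only [List.mem_cons, not_or]
          refine ⟨by simp, ?_⟩
          intro hx
          rcases ihs _ hx with ⟨i, hi, hieq⟩ | ⟨k, hk, hkr, hkeq⟩
          · exact absurd hieq (by simp)
          · rw [Sum.inr.injEq] at hkeq
            have := bidx_inj ht (by omega) (by omega) hkeq
            omega
      · rw [Walk.length_cons, Walk.length_cons, ihl]; omega
      · intro x hx
        rw [Walk.support_cons, Walk.support_cons] at hx
        simp only [List.mem_cons] at hx
        rcases hx with hx | hx | hx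
        · exact Or.inr ⟨m, le_refl _, by omega, hx⟩
        · exact Or.inl ⟨⟨m, hm⟩, le_refl _, hx⟩
        · rcases ihs _ hx with ⟨i, hi, hieq⟩ | ⟨k, hk, hkr, hkeq⟩
          · exact Or.inl ⟨i, by omega, hieq⟩
          · exact Or.inr ⟨k, by omega, hkr, hkeq⟩
      · intro i hi
        rw [Walk.edges_cons, Walk.edges_cons]
        simp only [List.mem_cons]
        rcases Nat.eq_or_lt_of_le hi with heq | hlt
        · have hieq : i = (⟨m, hm⟩ : Fin r) := by
            apply Fin.ext; simp only [Fin.val_mk]; omega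
          constructor
          · left
            rw [hieq]
            simp only [Fin.val_mk]
            rw [← heq, Fin.val_mk] at *
            exact Sym2.eq_swap
          · right; left
            rw [hieq]
            simp only [Fin.val_mk]
            rw [bidx_shift]
        · obtain ⟨h1, h2⟩ := ihe i (by omega)
          exact ⟨Or.inr (Or.inr h1), Or.inr (Or.inr h2)⟩
    · have hr1 : m + 1 = r := by omega
      refine ⟨?_, ?_, ?_, ?_⟩
      · rw [Walk.cons_isPath_iff, Walk.cons_isPath_iff]
        refine ⟨⟨(Walk.isPath_copy _ _ _).mpr Walk.IsPath.nil, by simp⟩, ?_⟩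
        rw [Walk.support_cons, Walk.support_copy, Walk.support_nil]
        simp only [List.mem_cons, List.mem_singleton, not_or]
        refine ⟨by simp, ?_, by simp⟩
        intro hx
        rw [Sum.inr.injEq] at hx
        have := bidx_inj ht (by omega) (by omega) hx
        omega
      · rw [Walk.length_cons, Walk.length_cons, Walk.length_copy, Walk.length_nil]; omega
      · intro x hx
        rw [Walk.support_cons, Walk.support_cons, Walk.support_copy, Walk.support_nil] at hx
        simp only [List.mem_cons, List.not_mem_nil, or_false] at hx
        rcases hx with hx | hx | hx
        · exact Or.inr ⟨m, le_refl _, by omega, hx⟩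
        · exact Or.inl ⟨⟨m, hm⟩, le_refl _, hx⟩
        · exact Or.inr ⟨r, by omega, le_refl _, hx⟩
      · intro i hi
        have hieq : i = (⟨m, hm⟩ : Fin r) := by
          apply Fin.ext; simp only [Fin.val_mk]; omega
        rw [Walk.edges_cons, Walk.edges_cons, Walk.edges_copy, Walk.edges_nil]
        simp only [List.mem_cons, List.not_mem_nil, or_false]
        constructor
        · left
          rw [hieq]
          simp only [Fin.val_mk]
          exact Sym2.eq_swap
        · right
          rw [hieq]
          simp only [Fin.val_mk]
          rw [bidx_shift]

end Spec
section Conj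

variable {r t : ℕ}

lemma bipPath_isPathGraph (hr : 0 < r) (ht : 0 < t) (hrt : r < t) (j : ℕ) :
    IsPathGraph (bipPath r t ht j) := by
  obtain ⟨hp, _, _, he⟩ := pwalk_spec ht hrt j r 0 hr (by omega)
  refine ⟨_, _, pwalk r t ht j 0 hr, hp, fun e => ⟨?_, fun h => Walk.edges_subset_edgeSet _ h⟩⟩
  rw [bipPath_edgeSet]
  rintro ⟨i, h | h⟩ <;> subst h
  · exact (he i (Nat.zero_le _)).1
  · exact (he i (Nat.zero_le _)).2

lemma bipPath_ncard (hr : 0 < r) (ht : 0 < t) (hrt : r < t) (j : ℕ) :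
    (bipPath r t ht j).edgeSet.ncard = 2 * r := by
  obtain ⟨hp, hl, _, he⟩ := pwalk_spec ht hrt j r 0 hr (by omega)
  have hset : (bipPath r t ht j).edgeSet = ↑(pwalk r t ht j 0 hr).edges.toFinset := by
    ext e
    simp only [Finset.coe_sort_coe, List.coe_toFinset, Set.mem_setOf_eq]
    constructor
    · rw [bipPath_edgeSet]
      rintro ⟨i, h | h⟩ <;> subst h
      · exact (he i (Nat.zero_le _)).1
      · exact (he i (Nat.zero_le _)).2
    · exact fun h => Walk.edges_subset_edgeSet _ h
  rw [hset, Set.ncard_coe_finset, List.card_toFinset,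
    List.dedup_eq_self.mpr hp.isTrail.edges_nodup, Walk.length_edges, hl]
  omega

lemma bipPath_le (ht : 0 < t) (j : ℕ) :
    bipPath r t ht j ≤ completeBipartiteGraph (Fin r) (Fin t) := by
  intro u v h
  rw [bipPath, SimpleGraph.fromEdgeSet_adj] at h
  obtain ⟨⟨i, he | he⟩, hne⟩ := h <;>
  · rw [Sym2.eq_iff] at he
    rcases he with ⟨h1, h2⟩ | ⟨h1, h2⟩ <;> subst h1 <;> subst h2 <;> simp

lemma mod_small_cancel (ht : 0 < t) {c a b : ℕ} (ha : a < t) (hb : b < t)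
    (h : (c + a) % t = (c + b) % t) : a = b := by
  have h2 : a ≡ b [MOD t] := Nat.ModEq.add_left_cancel' c h
  rwa [Nat.ModEq, Nat.mod_eq_of_lt ha, Nat.mod_eq_of_lt hb] at h2

lemma bipPath_disjoint {s : ℕ} (ht : 0 < t) (hts : t = 2 * s) {j j' : ℕ}
    (hj : j < s) (hj' : j' < s) (hne : j ≠ j') :
    Disjoint (bipPath r t ht j).edgeSet (bipPath r t ht j').edgeSet := by
  rw [Set.disjoint_left]
  intro e h1 h2
  rw [bipPath_edgeSet] at h1 h2
  obtain ⟨i, h1⟩ := h1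
  obtain ⟨i', h2⟩ := h2
  have key : ∀ p p' : ℕ, p < 2 → p' < 2 →
      e = s(Sum.inl i, Sum.inr (bidx t ht (i.val + 2 * j + p))) →
      e = s(Sum.inl i', Sum.inr (bidx t ht (i'.val + 2 * j' + p'))) → False := by
    intro p p' hp hp' he he'
    rw [he, Sym2.eq_iff] at he'
    rcases he' with ⟨ha, hb⟩ | ⟨ha, hb⟩
    · rw [Sum.inl.injEq] at ha
      subst ha
      rw [Sum.inr.injEq, bidx_eq_iff] at hb
      have hb' : (i.val + (2 * j + p)) % t = (i.val + (2 * j' + p')) % t := by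
        rw [← Nat.add_assoc, ← Nat.add_assoc]; exact hb
      have := mod_small_cancel ht (show 2 * j + p < t by omega)
        (show 2 * j' + p' < t by omega) hb'
      omega
    · exact absurd ha (by simp)
  rcases h1 with h1 | h1 <;> rcases h2 with h2 | h2
  · exact key 0 0 (by omega) (by omega) h1 h2
  · exact key 0 1 (by omega) (by omega) h1 h2
  · exact key 1 0 (by omega) (by omega) h1 h2
  · exact key 1 1 (by omega) (by omega) h1 h2

lemma pair_mem_bipPath {s : ℕ} (ht : 0 < t) (hrt : r < t) (hts : t = 2 * s) (i : Fin r) (b : Fin t) :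
    ∃ j : Fin s, s(Sum.inl i, Sum.inr b) ∈ (bipPath r t ht j.val).edgeSet := by
  have hs : 0 < s := by omega
  set d := (b.val + t - i.val) % t with hd
  have hdt : d < t := Nat.mod_lt _ ht
  refine ⟨⟨d / 2, by omega⟩, ?_⟩
  rw [bipPath_edgeSet]
  refine ⟨i, ?_⟩
  have hb : bidx t ht (i.val + d) = b := by
    apply Fin.ext
    show (i.val + (b.val + t - i.val) % t) % t = b.val
    have h1 : (i.val + (b.val + t - i.val) % t) % t = (i.val + (b.val + t - i.val)) % t :=
      Nat.ModEq.add_left i.val (Nat.mod_modEq _ t)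
    rw [h1]
    have h2 : i.val + (b.val + t - i.val) = b.val + t := by
      have := i.isLt
      omega
    rw [h2, Nat.add_mod_right]
    exact Nat.mod_eq_of_lt b.isLt
  rcases Nat.mod_two_eq_zero_or_one d with h0 | h1
  · left
    simp only [Fin.val_mk]
    rw [show i.val + 2 * (d / 2) = i.val + d from by omega, hb]
  · right
    simp only [Fin.val_mk]
    rw [show i.val + 2 * (d / 2) + 1 = i.val + d from by omega, hb]

lemma bipPath_union {s : ℕ} (hr : 0 < r) (ht : 0 < t) (hrt : r < t) (hts : t = 2 * s) :
    (⋃ j : Fin s, (bipPath r t ht j.val).edgeSet)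
      = (completeBipartiteGraph (Fin r) (Fin t)).edgeSet := by
  ext e
  simp only [Set.mem_iUnion]
  constructor
  · rintro ⟨j, hj⟩
    rw [bipPath_edgeSet] at hj
    obtain ⟨i, h | h⟩ := hj <;> subst h <;> rw [SimpleGraph.mem_edgeSet] <;> simp
  · intro he
    induction e using Sym2.ind with
    | _ u v =>
      rw [SimpleGraph.mem_edgeSet] at he
      rcases u with i | b <;> rcases v with i' | b'
      · simp at he
      · exact pair_mem_bipPath ht hrt hts i b'
      · rw [Sym2.eq_swap]
        exact pair_mem_bipPath ht hrt hts i' b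
      · simp at he

end Conj
section Coloring

/-- sign of edge `e_k` of path `G_j` -/
def Esig (r t : ℕ) (hr : 0 < r) (ht : 0 < t) (σ : Sym2 (Fin r ⊕ Fin t) → ℤ)
    (j k : ℕ) : ℤ :=
  σ s(Sum.inl (⟨k / 2 % r, Nat.mod_lt _ hr⟩ : Fin r),
     Sum.inr (bidx t ht (k / 2 % r + 2 * j + k % 2)))

/-- switching potential at `u_i` for path `G_j` -/
def mu (r t : ℕ) (hr : 0 < r) (ht : 0 < t) (σ : Sym2 (Fin r ⊕ Fin t) → ℤ)
    (j i : ℕ) : ℤ :=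
  ∏ k ∈ Finset.range (2 * i + 1), Esig r t hr ht σ j k

/-- the index `d` with `b ≡ i + d (mod t)` -/
def dd (r t : ℕ) (i : Fin r) (b : Fin t) : ℕ := (b.val + t - i.val) % t

/-- color at the left endpoint of edge `(i,b)` -/
def cL (r t : ℕ) (hr : 0 < r) (ht : 0 < t) (σ : Sym2 (Fin r ⊕ Fin t) → ℤ)
    (i : Fin r) (b : Fin t) : ℤ :=
  mu r t hr ht σ (dd r t i b / 2) i.val * ((dd r t i b / 2 + 1 : ℕ) : ℤ) *
    (if dd r t i b % 2 = 0 then 1 else -1)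

/-- color at the right endpoint of edge `(i,b)` -/
def cR (r t : ℕ) (hr : 0 < r) (ht : 0 < t) (σ : Sym2 (Fin r ⊕ Fin t) → ℤ)
    (i : Fin r) (b : Fin t) : ℤ :=
  - σ s(Sum.inl i, Sum.inr b) * cL r t hr ht σ i b

def FF (r t : ℕ) (hr : 0 < r) (ht : 0 < t) (σ : Sym2 (Fin r ⊕ Fin t) → ℤ)
    (u x y : Fin r ⊕ Fin t) : ℤ :=
  match u, x, y with
  | Sum.inl i, Sum.inl i', Sum.inr b => if i' = i then cL r t hr ht σ i b else 0
  | Sum.inl i, Sum.inr b, Sum.inl i' => if i' = i then cL r t hr ht σ i b else 0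
  | Sum.inr b, Sum.inl i, Sum.inr b' => if b' = b then cR r t hr ht σ i b else 0
  | Sum.inr b, Sum.inr b', Sum.inl i => if b' = b then cR r t hr ht σ i b else 0
  | _, _, _ => 0

lemma FF_swap (r t : ℕ) (hr : 0 < r) (ht : 0 < t) (σ : Sym2 (Fin r ⊕ Fin t) → ℤ)
    (u x y : Fin r ⊕ Fin t) : FF r t hr ht σ u x y = FF r t hr ht σ u y x := by
  rcases u with i | b <;> rcases x with a | a <;> rcases y with c | c <;> rfl

/-- the edge coloring -/
def fColor (r t : ℕ) (hr : 0 < r) (ht : 0 < t) (σ : Sym2 (Fin r ⊕ Fin t) → ℤ) :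
    (Fin r ⊕ Fin t) → Sym2 (Fin r ⊕ Fin t) → ℤ := fun u =>
  Sym2.lift ⟨fun x y => FF r t hr ht σ u x y, fun x y => FF_swap r t hr ht σ u x y⟩

lemma fColor_mk (r t : ℕ) (hr : 0 < r) (ht : 0 < t) (σ : Sym2 (Fin r ⊕ Fin t) → ℤ)
    (u x y : Fin r ⊕ Fin t) : fColor r t hr ht σ u s(x, y) = FF r t hr ht σ u x y :=
  Sym2.lift_mk _ _ _

end Coloring
section Facts

variable {r t : ℕ}

lemma mod_small_cancel' (ht : 0 < t) {a b c : ℕ} (ha : a < t) (hb : b < t)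
    (h : (a + c) % t = (b + c) % t) : a = b := by
  apply mod_small_cancel ht ha hb (c := c)
  rwa [Nat.add_comm c a, Nat.add_comm c b]

lemma dd_lt (ht : 0 < t) (i : Fin r) (b : Fin t) : dd r t i b < t := Nat.mod_lt _ ht

lemma bidx_add_dd (ht : 0 < t) (hrt : r < t) (i : Fin r) (b : Fin t) :
    bidx t ht (i.val + dd r t i b) = b := by
  apply Fin.ext
  show (i.val + (b.val + t - i.val) % t) % t = b.val
  have h1 : (i.val + (b.val + t - i.val) % t) % t = (i.val + (b.val + t - i.val)) % t :=
    Nat.ModEq.add_left i.val (Nat.mod_modEq _ t)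
  rw [h1]
  have h2 : i.val + (b.val + t - i.val) = b.val + t := by
    have := i.isLt
    omega
  rw [h2, Nat.add_mod_right]
  exact Nat.mod_eq_of_lt b.isLt

lemma dd_inj_b (ht : 0 < t) (hrt : r < t) {i : Fin r} {b b' : Fin t}
    (h : dd r t i b = dd r t i b') : b = b' := by
  have h1 := bidx_add_dd ht hrt i b
  have h2 := bidx_add_dd ht hrt i b'
  rw [← h1, ← h2, h]

lemma dd_inj_i (ht : 0 < t) (hrt : r < t) {i i' : Fin r} {b : Fin t}
    (h : dd r t i b = dd r t i' b) : i = i' := by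
  unfold dd at h
  have hi := i.isLt
  have hi' := i'.isLt
  rcases Nat.le_total i.val i'.val with hle | hle
  · have h' : ((i'.val - i.val) + (b.val + t - i'.val)) % t
        = (0 + (b.val + t - i'.val)) % t := by
      rw [show (i'.val - i.val) + (b.val + t - i'.val) = b.val + t - i.val by omega,
        Nat.zero_add]
      exact h
    have := mod_small_cancel' ht (show i'.val - i.val < t by omega) ht h'
    exact Fin.ext (by omega)
  · have h' : ((i.val - i'.val) + (b.val + t - i.val)) % t
        = (0 + (b.val + t - i.val)) % t := by
      rw [show (i.val - i'.val) + (b.val + t - i.val) = b.val + t - i'.val by omega,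
        Nat.zero_add]
      exact h.symm
    have := mod_small_cancel' ht (show i.val - i'.val < t by omega) ht h'
    exact Fin.ext (by omega)

variable {σ : Sym2 (Fin r ⊕ Fin t) → ℤ}

lemma sigma_pm (hσ : IsSignature (completeBipartiteGraph (Fin r) (Fin t)) σ)
    (i : Fin r) (b : Fin t) :
    σ s(Sum.inl i, Sum.inr b) = 1 ∨ σ s(Sum.inl i, Sum.inr b) = -1 :=
  hσ _ (by rw [SimpleGraph.mem_edgeSet]; simp)

lemma Esig_pm (hr : 0 < r) (ht : 0 < t)
    (hσ : IsSignature (completeBipartiteGraph (Fin r) (Fin t)) σ) (j k : ℕ) :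
    Esig r t hr ht σ j k = 1 ∨ Esig r t hr ht σ j k = -1 :=
  sigma_pm hσ _ _

lemma mu_pm (hr : 0 < r) (ht : 0 < t)
    (hσ : IsSignature (completeBipartiteGraph (Fin r) (Fin t)) σ) (j i : ℕ) :
    mu r t hr ht σ j i = 1 ∨ mu r t hr ht σ j i = -1 := by
  unfold mu
  refine Finset.prod_induction _ (fun x => x = 1 ∨ x = -1) ?_ (Or.inl rfl) ?_
  · rintro x y (rfl | rfl) (rfl | rfl) <;> norm_num
  · exact fun k _ => Esig_pm hr ht hσ j k

lemma cL_natAbs (hr : 0 < r) (ht : 0 < t)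
    (hσ : IsSignature (completeBipartiteGraph (Fin r) (Fin t)) σ) (i : Fin r) (b : Fin t) :
    (cL r t hr ht σ i b).natAbs = dd r t i b / 2 + 1 := by
  unfold cL
  rcases mu_pm hr ht hσ (dd r t i b / 2) i.val with hmu | hmu <;>
    rw [hmu] <;> split_ifs <;>
    simp only [one_mul, mul_one, neg_one_mul, mul_neg_one, neg_neg,
      Int.natAbs_neg, Int.natAbs_natCast]

lemma cL_ne (hr : 0 < r) (ht : 0 < t)
    (hσ : IsSignature (completeBipartiteGraph (Fin r) (Fin t)) σ) (i : Fin r) (b : Fin t) :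
    cL r t hr ht σ i b ≠ 0 := by
  intro h
  have := cL_natAbs hr ht hσ i b
  rw [h] at this
  simp at this

lemma cR_eq (hr : 0 < r) (ht : 0 < t) (i : Fin r) (b : Fin t) :
    cR r t hr ht σ i b = - σ s(Sum.inl i, Sum.inr b) * cL r t hr ht σ i b := rfl

lemma cR_natAbs (hr : 0 < r) (ht : 0 < t)
    (hσ : IsSignature (completeBipartiteGraph (Fin r) (Fin t)) σ) (i : Fin r) (b : Fin t) :
    (cR r t hr ht σ i b).natAbs = dd r t i b / 2 + 1 := by
  rw [cR_eq]
  rcases sigma_pm hσ i b with hs | hs <;> rw [hs] <;>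
    simp only [neg_neg, neg_one_mul, one_mul, neg_mul, Int.natAbs_neg] <;>
    exact cL_natAbs hr ht hσ i b

lemma cR_ne (hr : 0 < r) (ht : 0 < t)
    (hσ : IsSignature (completeBipartiteGraph (Fin r) (Fin t)) σ) (i : Fin r) (b : Fin t) :
    cR r t hr ht σ i b ≠ 0 := by
  intro h
  have := cR_natAbs hr ht hσ i b
  rw [h] at this
  simp at this

end Facts
section Proper

variable {r t : ℕ} {σ : Sym2 (Fin r ⊕ Fin t) → ℤ}

lemma Esig_even (hr : 0 < r) (ht : 0 < t) (j : ℕ) (i : Fin r) :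
    Esig r t hr ht σ j (2 * i.val) =
      σ s(Sum.inl i, Sum.inr (bidx t ht (i.val + 2 * j))) := by
  unfold Esig
  have h1 : 2 * i.val / 2 % r = i.val := by
    rw [Nat.mul_div_cancel_left _ (by norm_num : 0 < 2), Nat.mod_eq_of_lt i.isLt]
  have h2 : 2 * i.val % 2 = 0 := by omega
  simp only [h1, h2, Nat.add_zero, Fin.eta]

lemma Esig_odd (hr : 0 < r) (ht : 0 < t) (j : ℕ) (i : Fin r) :
    Esig r t hr ht σ j (2 * i.val + 1) =
      σ s(Sum.inl i, Sum.inr (bidx t ht (i.val + 2 * j + 1))) := by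
  unfold Esig
  have h1 : (2 * i.val + 1) / 2 % r = i.val := by
    rw [show (2 * i.val + 1) / 2 = i.val by omega, Nat.mod_eq_of_lt i.isLt]
  have h2 : (2 * i.val + 1) % 2 = 1 := by omega
  simp only [h1, h2, Fin.eta]

lemma mu_succ (hr : 0 < r) (ht : 0 < t) (j i : ℕ) :
    mu r t hr ht σ j (i + 1) =
      mu r t hr ht σ j i * Esig r t hr ht σ j (2 * i + 1) * Esig r t hr ht σ j (2 * i + 2) := by
  unfold mu
  rw [show 2 * (i + 1) + 1 = (2 * i + 1) + 1 + 1 by ring,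
    Finset.prod_range_succ, Finset.prod_range_succ]

/-- the `u`-side properness -/
lemma cL_inj (hr : 0 < r) (ht : 0 < t) (hrt : r < t)
    (hσ : IsSignature (completeBipartiteGraph (Fin r) (Fin t)) σ)
    {i : Fin r} {b b' : Fin t} (hne : b ≠ b') :
    cL r t hr ht σ i b ≠ cL r t hr ht σ i b' := by
  intro heq
  have hd : dd r t i b ≠ dd r t i b' := fun h => hne (dd_inj_b ht hrt h)
  by_cases hj : dd r t i b / 2 = dd r t i b' / 2
  · unfold cL at heq
    rw [← hj] at heq
    rcases mu_pm hr ht hσ (dd r t i b / 2) i.val with hmu | hmu <;> rw [hmu] at heq <;>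
      simp only [one_mul, mul_one, mul_neg_one, neg_one_mul, neg_neg] at heq <;>
      split_ifs at heq with hA hB <;> omega
  · have h1 := cL_natAbs hr ht hσ i b
    have h2 := cL_natAbs hr ht hσ i b'
    rw [heq] at h1
    omega

/-- together with nonvanishing this gives the `v`-side properness -/
lemma cR_negate (hr : 0 < r) (ht : 0 < t) (hrt : r < t)
    (hσ : IsSignature (completeBipartiteGraph (Fin r) (Fin t)) σ)
    {i i' : Fin r} {b : Fin t} (h1 : dd r t i b % 2 = 0) (h2 : dd r t i' b % 2 = 1)
    (hj : dd r t i b / 2 = dd r t i' b / 2) :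
    cR r t hr ht σ i b = - cR r t hr ht σ i' b := by
  obtain ⟨j, hd, hd'⟩ : ∃ j, dd r t i b = 2 * j ∧ dd r t i' b = 2 * j + 1 :=
    ⟨dd r t i b / 2, by omega, by omega⟩
  have hb : bidx t ht (i.val + 2 * j) = b := by rw [← hd]; exact bidx_add_dd ht hrt i b
  have hb' : bidx t ht (i'.val + 2 * j + 1) = b := by
    rw [Nat.add_assoc, ← hd']; exact bidx_add_dd ht hrt i' b
  have hii' : i.val = i'.val + 1 := by
    have hbid : bidx t ht (i.val + 2 * j) = bidx t ht (i'.val + 1 + 2 * j) := by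
      rw [hb, ← hb', bidx_eq_iff]; congr 1; omega
    rw [bidx_eq_iff] at hbid
    exact mod_small_cancel' ht (i.isLt.trans hrt)
      (show i'.val + 1 < t by have := i'.isLt; omega) hbid
  have hsig : σ s(Sum.inl i, Sum.inr b) = Esig r t hr ht σ j (2 * i'.val + 2) := by
    rw [show 2 * i'.val + 2 = 2 * i.val by omega, Esig_even hr ht j i, hb]
  have hsig' : σ s(Sum.inl i', Sum.inr b) = Esig r t hr ht σ j (2 * i'.val + 1) := by
    rw [Esig_odd hr ht j i', hb']
  rw [cR_eq, cR_eq]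
  unfold cL
  rw [hd, hd']
  rw [show 2 * j / 2 = j from by omega, show (2 * j + 1) / 2 = j from by omega]
  rw [if_pos (show 2 * j % 2 = 0 from by omega),
    if_neg (show ¬((2 * j + 1) % 2 = 0) from by omega)]
  rw [hsig, hsig', hii', mu_succ hr ht]
  rcases Esig_pm hr ht hσ j (2 * i'.val + 2) with hE | hE <;> rw [hE] <;> ring

lemma cR_inj (hr : 0 < r) (ht : 0 < t) (hrt : r < t)
    (hσ : IsSignature (completeBipartiteGraph (Fin r) (Fin t)) σ)
    {i i' : Fin r} {b : Fin t} (hne : i ≠ i') :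
    cR r t hr ht σ i b ≠ cR r t hr ht σ i' b := by
  intro heq
  have hd : dd r t i b ≠ dd r t i' b := fun h => hne (dd_inj_i ht hrt h)
  by_cases hj : dd r t i b / 2 = dd r t i' b / 2
  · rcases Nat.mod_two_eq_zero_or_one (dd r t i b) with h1 | h1 <;>
      rcases Nat.mod_two_eq_zero_or_one (dd r t i' b) with h2 | h2
    · omega
    · have hneg := cR_negate hr ht hrt hσ h1 h2 hj
      have hnz := cR_ne hr ht hσ i' b
      rw [heq] at hneg
      omega
    · have hneg := cR_negate hr ht hrt hσ h2 h1 hj.symm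
      have hnz := cR_ne hr ht hσ i b
      rw [heq] at hnz
      rw [← heq] at hneg
      omega
    · omega
  · have h1 := cR_natAbs hr ht hσ i b
    have h2 := cR_natAbs hr ht hσ i' b
    rw [heq] at h1
    omega

end Proper
section Main

variable {r t s : ℕ}

lemma colorable_K (hr : 0 < r) (ht : 0 < t) (hrt : r < t) (hts : t = 2 * s)
    {σ : Sym2 (Fin r ⊕ Fin t) → ℤ}
    (hσ : IsSignature (completeBipartiteGraph (Fin r) (Fin t)) σ) :
    Signed.Colorable (completeBipartiteGraph (Fin r) (Fin t)) σ t := by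
  refine ⟨fColor r t hr ht σ, ?_, ?_, ?_⟩
  · -- colors lie in the color set
    intro u v huv
    have hmemL : ∀ (i : Fin r) (b : Fin t), cL r t hr ht σ i b ∈ colorSet t := by
      intro i b
      refine ⟨?_, fun _ => cL_ne hr ht hσ i b⟩
      rw [cL_natAbs hr ht hσ i b]
      have := dd_lt (i := i) (b := b) ht
      omega
    have hmemR : ∀ (i : Fin r) (b : Fin t), cR r t hr ht σ i b ∈ colorSet t := by
      intro i b
      refine ⟨?_, fun _ => cR_ne hr ht hσ i b⟩
      rw [cR_natAbs hr ht hσ i b]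
      have := dd_lt (i := i) (b := b) ht
      omega
    rcases u with i | b <;> rcases v with i' | b' <;> simp only [completeBipartiteGraph_adj] at huv <;>
      [skip; skip; skip; skip]
    · simp at huv
    · rw [fColor_mk]
      show (if i = i then cL r t hr ht σ i b' else 0) ∈ colorSet t
      rw [if_pos rfl]
      exact hmemL i b'
    · rw [fColor_mk]
      show (if b = b then cR r t hr ht σ i' b else 0) ∈ colorSet t
      rw [if_pos rfl]
      exact hmemR i' b
    · simp at huv
  · -- symmetry condition
    intro u v huv
    rcases u with i | b <;> rcases v with i' | b'
    · simp at huv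
    · rw [fColor_mk, fColor_mk]
      show (if i = i then cL r t hr ht σ i b' else 0) =
        -σ s(Sum.inl i, Sum.inr b') * (if b' = b' then cR r t hr ht σ i b' else 0)
      rw [if_pos rfl, if_pos rfl, cR_eq]
      rcases sigma_pm hσ i b' with hs | hs <;> rw [hs] <;> ring
    · rw [fColor_mk, fColor_mk]
      show (if b = b then cR r t hr ht σ i' b else 0) =
        -σ s(Sum.inr b, Sum.inl i') * (if i' = i' then cL r t hr ht σ i' b else 0)
      rw [if_pos rfl, if_pos rfl, cR_eq, Sym2.eq_swap (a := Sum.inr b)]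
    · simp at huv
  · -- properness
    intro u v w huv huw hvw
    rcases u with i | b
    · rcases v with i' | b' ; · simp at huv
      rcases w with i'' | b'' ; · simp at huw
      rw [fColor_mk, fColor_mk]
      show (if i = i then cL r t hr ht σ i b' else 0) ≠
        (if i = i then cL r t hr ht σ i b'' else 0)
      rw [if_pos rfl, if_pos rfl]
      exact cL_inj hr ht hrt hσ (fun h => hvw (by rw [h]))
    · rcases v with i' | b' ; swap; · simp at huv
      rcases w with i'' | b'' ; swap; · simp at huw
      rw [fColor_mk, fColor_mk]
      show (if b = b then cR r t hr ht σ i' b else 0) ≠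
        (if b = b then cR r t hr ht σ i'' b else 0)
      rw [if_pos rfl, if_pos rfl]
      exact cR_inj hr ht hrt hσ (fun h => hvw (by rw [h]))

lemma color_lb (hr : 0 < r) {σ : Sym2 (Fin r ⊕ Fin t) → ℤ} {n : ℕ}
    (hc : Signed.Colorable (completeBipartiteGraph (Fin r) (Fin t)) σ n) : t ≤ n := by
  obtain ⟨f, hmem, _, hprop⟩ := hc
  set u : Fin r ⊕ Fin t := Sum.inl ⟨0, hr⟩ with hu
  have hadj : ∀ b : Fin t, (completeBipartiteGraph (Fin r) (Fin t)).Adj u (Sum.inr b) := by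
    intro b; simp [hu]
  set g : Fin t → ℤ := fun b => f u s(u, Sum.inr b) with hg
  have hgmem : ∀ b, 2 * (g b).natAbs ≤ n ∧ (n % 2 = 0 → g b ≠ 0) := by
    intro b
    obtain ⟨h1, h2⟩ := hmem u (Sum.inr b) (hadj b)
    exact ⟨h1, fun hn => h2 (Nat.even_iff.mpr hn)⟩
  have hginj : ∀ b b', g b = g b' → b = b' := by
    intro b b' h
    by_contra hne
    exact hprop u (Sum.inr b) (Sum.inr b') (hadj b) (hadj b')
      (fun hc => hne (Sum.inr.inj hc)) h
  set ι : ℤ → ℕ := fun m =>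
    if 0 < m then 2 * (m - 1).toNat else if m < 0 then 2 * m.natAbs - 1 else n - 1 with hι
  have hιlt : ∀ m : ℤ, 2 * m.natAbs ≤ n → (n % 2 = 0 → m ≠ 0) → ι m < n := by
    intro m h1 h2
    rcases Nat.eq_zero_or_pos (n % 2) with hn | hn
    · have hm0 : m ≠ 0 := h2 hn
      simp only [hι]
      split_ifs <;> omega
    · simp only [hι]
      split_ifs <;> omega
  have hιinj : ∀ m m' : ℤ, 2 * m.natAbs ≤ n → (n % 2 = 0 → m ≠ 0) →
      2 * m'.natAbs ≤ n → (n % 2 = 0 → m' ≠ 0) → ι m = ι m' → m = m' := by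
    intro m m' h1 h2 h3 h4 heq
    rcases Nat.eq_zero_or_pos (n % 2) with hn | hn
    · have hm0 : m ≠ 0 := h2 hn
      have hm0' : m' ≠ 0 := h4 hn
      simp only [hι] at heq
      split_ifs at heq <;> omega
    · simp only [hι] at heq
      split_ifs at heq <;> omega
  have hcard := Fintype.card_le_of_injective
    (fun b : Fin t => (⟨ι (g b), hιlt _ (hgmem b).1 (hgmem b).2⟩ : Fin n)) ?_
  · simpa using hcard
  · intro b b' h
    rw [Fin.mk.injEq] at h
    exact hginj _ _ (hιinj _ _ (hgmem b).1 (hgmem b).2 (hgmem b').1 (hgmem b').2 h)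

lemma chromIndex_K (hr : 0 < r) (ht : 0 < t) (hrt : r < t) (hts : t = 2 * s)
    {σ : Sym2 (Fin r ⊕ Fin t) → ℤ}
    (hσ : IsSignature (completeBipartiteGraph (Fin r) (Fin t)) σ) :
    chromIndex (completeBipartiteGraph (Fin r) (Fin t)) σ = t := by
  apply le_antisymm
  · exact Nat.sInf_le (colorable_K hr ht hrt hts hσ)
  · exact le_csInf ⟨t, colorable_K hr ht hrt hts hσ⟩ fun n hn => color_lb hr hn

lemma maxDeg_K (hr : 0 < r) (hrt : r < t) :
    maxDeg (completeBipartiteGraph (Fin r) (Fin t)) = t := by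
  rw [maxDeg]
  letI inst : DecidableRel (completeBipartiteGraph (Fin r) (Fin t)).Adj := Classical.decRel _
  have hdegl : ∀ i : Fin r,
      (completeBipartiteGraph (Fin r) (Fin t)).degree (Sum.inl i) = t := by
    intro i
    show ((completeBipartiteGraph (Fin r) (Fin t)).neighborFinset (Sum.inl i)).card = t
    have : (completeBipartiteGraph (Fin r) (Fin t)).neighborFinset (Sum.inl i)
        = Finset.univ.map ⟨Sum.inr, Sum.inr_injective⟩ := by
      ext w
      rcases w with a | a <;> simp [SimpleGraph.mem_neighborFinset]
    rw [this, Finset.card_map, Finset.card_univ, Fintype.card_fin]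
  have hdegr : ∀ b : Fin t,
      (completeBipartiteGraph (Fin r) (Fin t)).degree (Sum.inr b) = r := by
    intro b
    show ((completeBipartiteGraph (Fin r) (Fin t)).neighborFinset (Sum.inr b)).card = r
    have : (completeBipartiteGraph (Fin r) (Fin t)).neighborFinset (Sum.inr b)
        = Finset.univ.map ⟨Sum.inl, Sum.inl_injective⟩ := by
      ext w
      rcases w with a | a <;> simp [SimpleGraph.mem_neighborFinset]
    rw [this, Finset.card_map, Finset.card_univ, Fintype.card_fin]
  apply le_antisymm
  · apply SimpleGraph.maxDegree_le_of_forall_degree_le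
    intro v
    rcases v with i | b
    · rw [hdegl i]
    · rw [hdegr b]; omega
  · have h := SimpleGraph.degree_le_maxDegree (completeBipartiteGraph (Fin r) (Fin t))
      (Sum.inl (⟨0, hr⟩ : Fin r))
    rwa [hdegl ⟨0, hr⟩] at h

lemma class1_K (hr : 0 < r) (ht : 0 < t) (hrt : r < t) (hts : t = 2 * s) :
    Class1pm (completeBipartiteGraph (Fin r) (Fin t)) := by
  intro σ hσ
  rw [maxDeg_K hr hrt]
  exact chromIndex_K hr ht hrt hts hσ

end Main

/-- For `r < t = 2s`, the graphs `G_j` are pairwise edge-disjoint paths with `2r` edges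
decomposing `K_{r,t}` into `s` paths; hence `K_{r,t}` is of class `1^±`. -/
theorem bipartite_even_class1 (r t s : ℕ) (hr : 0 < r) (hrt : r < t) (hts : t = 2 * s) :
    (∀ j : Fin s, IsPathGraph (bipPath r t (by omega) j.val)) ∧
    (∀ j : Fin s, (bipPath r t (by omega) j.val).edgeSet.ncard = 2 * r) ∧
    (∀ j : Fin s, bipPath r t (by omega) j.val ≤ completeBipartiteGraph (Fin r) (Fin t)) ∧
    (∀ j j' : Fin s, j ≠ j' →
      Disjoint ((bipPath r t (by omega) j.val).edgeSet)
        ((bipPath r t (by omega) j'.val).edgeSet)) ∧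
    (⋃ j : Fin s, (bipPath r t (by omega) j.val).edgeSet)
      = (completeBipartiteGraph (Fin r) (Fin t)).edgeSet ∧
    Class1pm (completeBipartiteGraph (Fin r) (Fin t)) := by
  have ht : 0 < t := by omega
  exact ⟨fun j => bipPath_isPathGraph hr ht hrt j.val,
    fun j => bipPath_ncard hr ht hrt j.val,
    fun j => bipPath_le ht j.val,
    fun j j' hne => bipPath_disjoint ht hts j.isLt j'.isLt (fun h => hne (Fin.ext h)),
    bipPath_union hr ht hrt hts,
    class1_K hr ht hrt hts⟩
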